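/- Let K be a field and D a division K-algebra such that the algebra D ⊗_K D^o is a Noetherian ring. Then D satisfies the ascending chain condition on division K-subalgebras: every ascending chain Γ₁ ⊆ Γ₂ ⊆ ⋯ of division K-subalgebras of D eventually stabilizes. -/

import Mathlib

open TensorProduct MulOpposite

/-- For a division subalgebra `Γ` of `D`, there is a `K`-linear projection `D → D` onto `Γ`
which is right `Γ`-linear. -/
lemma exists_proj (K D : Type*) [Field K] [DivisionRing D] [Algebra K D]
    (Γ : Subalgebra K D) (hdiv : ∀ x ∈ Γ, x ≠ 0 → x⁻¹ ∈ Γ) :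
    ∃ p : D →ₗ[K] D, (∀ γ ∈ Γ, p γ = γ) ∧ (∀ a, p a ∈ Γ) ∧
      (∀ a : D, ∀ γ ∈ Γ, p (a * γ) = p a * γ) := by
  haveI : Nontrivial Γ := ⟨⟨0, 1, fun h => by
    simpa using congrArg (Subtype.val) h⟩⟩
  letI : DivisionRing Γ := DivisionRing.ofIsUnitOrEqZero (fun a => by
    rcases eq_or_ne a 0 with h | h
    · exact Or.inr h
    · have ha : (a : D) ≠ 0 := fun hc => h (Subtype.ext hc)
      refine Or.inl ⟨⟨a, ⟨(a : D)⁻¹, hdiv a a.2 ha⟩, ?_, ?_⟩, rfl⟩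
      · exact Subtype.ext (mul_inv_cancel₀ ha)
      · exact Subtype.ext (inv_mul_cancel₀ ha))
  letI : SMul Γᵐᵒᵖ D := ⟨fun g d => d * (g.unop : D)⟩
  have smul_def : ∀ (g : Γᵐᵒᵖ) (d : D), g • d = d * (g.unop : D) := fun _ _ => rfl
  letI : Module Γᵐᵒᵖ D :=
    { one_smul := fun d => by simp [smul_def]
      mul_smul := fun g h d => by
        simp only [smul_def, unop_mul, Subalgebra.coe_mul, mul_assoc]
      smul_add := fun g d e => by simp [smul_def, add_mul]
      smul_zero := fun g => by simp [smul_def]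
      add_smul := fun g h d => by
        simp only [smul_def, unop_add, Subalgebra.coe_add, mul_add]
      zero_smul := fun d => by simp [smul_def] }
  let Γsub : Submodule Γᵐᵒᵖ D :=
    { carrier := Γ
      add_mem' := fun ha hb => Γ.add_mem ha hb
      zero_mem' := Γ.zero_mem
      smul_mem' := fun g d hd => Γ.mul_mem hd g.unop.2 }
  obtain ⟨W, hW⟩ := Submodule.exists_isCompl Γsub
  let π := Submodule.linearProjOfIsCompl Γsub W hW
  have hπleft : ∀ x (hx : x ∈ Γsub), π x = ⟨x, hx⟩ :=
    fun x hx => Submodule.linearProjOfIsCompl_apply_left hW ⟨x, hx⟩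
  have hmul : ∀ (a : D) (γ : D), γ ∈ Γ → ((π (a * γ) : D)) = (π a : D) * γ := by
    intro a γ hγ
    have : a * γ = (op (⟨γ, hγ⟩ : Γ)) • a := rfl
    rw [this, map_smul]
    rfl
  have hsmulK : ∀ (k : K) (a : D), ((π (k • a) : D)) = k • ((π a : D)) := by
    intro k a
    have h1 : k • a = a * algebraMap K D k := by
      rw [Algebra.smul_def, Algebra.commutes]
    rw [h1, hmul a _ (Γ.algebraMap_mem k), Algebra.smul_def, Algebra.commutes]
  refine ⟨{ toFun := fun d => (π d : D)
            map_add' := fun a b => by rw [map_add, Submodule.coe_add]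
            map_smul' := hsmulK }, ?_, ?_, ?_⟩
  · intro γ hγ
    simp only [LinearMap.coe_mk, AddHom.coe_mk]
    rw [hπleft γ hγ]
  · intro a
    exact (π a).2
  · intro a γ hγ
    exact hmul a γ hγ

/-- Key lemma: if `x ⊗ 1 - 1 ⊗ op x` lies in the left ideal generated by the
corresponding elements for a division subalgebra `Γ`, then `x ∈ Γ`. -/
lemma key (K D : Type*) [Field K] [DivisionRing D] [Algebra K D]
    (Γ : Subalgebra K D) (hdiv : ∀ x ∈ Γ, x ≠ 0 → x⁻¹ ∈ Γ) (x : D)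
    (hx : x ⊗ₜ[K] (1 : Dᵐᵒᵖ) - (1 : D) ⊗ₜ[K] (op x) ∈
      Submodule.span (D ⊗[K] Dᵐᵒᵖ)
        {y | ∃ g ∈ Γ, y = g ⊗ₜ[K] (1 : Dᵐᵒᵖ) - (1 : D) ⊗ₜ[K] (op g)}) :
    x ∈ Γ := by
  obtain ⟨p, hpl, hpr, hpmul⟩ := exists_proj K D Γ hdiv
  -- the K-linear map Φ : D ⊗ Dᵐᵒᵖ → D, a ⊗ b ↦ p a * unop b
  let Φ : D ⊗[K] Dᵐᵒᵖ →ₗ[K] D := TensorProduct.lift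
    (LinearMap.mk₂ K (fun a b => p a * unop b)
      (fun a a' b => by rw [map_add, add_mul])
      (fun k a b => by rw [map_smul, smul_mul_assoc])
      (fun a b b' => by rw [unop_add, mul_add])
      (fun k a b => by rw [unop_smul, mul_smul_comm]))
  have hΦ : ∀ (a : D) (b : Dᵐᵒᵖ), Φ (a ⊗ₜ[K] b) = p a * unop b := fun a b => by
    simp [Φ]
  -- the set of m with Φ (r * m) = 0 for all r is a left ideal
  let S : Submodule (D ⊗[K] Dᵐᵒᵖ) (D ⊗[K] Dᵐᵒᵖ) :=
    { carrier := {m | ∀ r : D ⊗[K] Dᵐᵒᵖ, Φ (r * m) = 0}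
      add_mem' := fun {m} {m'} hm hm' r => by
        rw [mul_add, map_add, hm r, hm' r, add_zero]
      zero_mem' := fun r => by rw [mul_zero, map_zero]
      smul_mem' := fun c m hm r => by
        rw [smul_eq_mul, ← mul_assoc]; exact hm (r * c) }
  have hgen : {y | ∃ g ∈ Γ, y = g ⊗ₜ[K] (1 : Dᵐᵒᵖ) - (1 : D) ⊗ₜ[K] (op g)} ⊆ S := by
    rintro y ⟨γ, hγ, rfl⟩
    intro r
    induction r using TensorProduct.induction_on with
    | zero => rw [zero_mul, map_zero]
    | tmul a b =>
        rw [mul_sub, Algebra.TensorProduct.tmul_mul_tmul,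
          Algebra.TensorProduct.tmul_mul_tmul, map_sub, hΦ, hΦ,
          hpmul a γ hγ, mul_one, mul_one, unop_mul, unop_op, mul_assoc, sub_self]
    | add r s hr hs => rw [add_mul, map_add, hr, hs, add_zero]
  have hsub : Submodule.span (D ⊗[K] Dᵐᵒᵖ)
      {y | ∃ g ∈ Γ, y = g ⊗ₜ[K] (1 : Dᵐᵒᵖ) - (1 : D) ⊗ₜ[K] (op g)} ≤ S :=
    Submodule.span_le.2 hgen
  have h0 : Φ (x ⊗ₜ[K] (1 : Dᵐᵒᵖ) - (1 : D) ⊗ₜ[K] (op x)) = 0 := by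
    have := hsub hx 1
    rwa [one_mul] at this
  rw [map_sub, hΦ, hΦ, unop_one, mul_one, unop_op, hpl 1 Γ.one_mem, one_mul,
    sub_eq_zero] at h0
  rw [← h0]
  exact hpr x

/-- If `D` is a division `K`-algebra with `D ⊗[K] Dᵐᵒᵖ` a Noetherian ring,
then `D` satisfies the ascending chain condition on division `K`-subalgebras. -/
theorem stmt0 (K D : Type*) [Field K] [DivisionRing D] [Algebra K D]
    (hNoeth : IsNoetherianRing (D ⊗[K] Dᵐᵒᵖ))
    (Γ : ℕ → Subalgebra K D)
    (hdiv : ∀ n, ∀ x ∈ Γ n, x ≠ 0 → x⁻¹ ∈ Γ n)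
    (hchain : ∀ n, Γ n ≤ Γ (n + 1)) :
    ∃ N : ℕ, ∀ n : ℕ, N ≤ n → Γ n = Γ N := by
  have hmono : Monotone Γ := monotone_nat_of_le_succ hchain
  -- the associated chain of left ideals
  let I : ℕ → Submodule (D ⊗[K] Dᵐᵒᵖ) (D ⊗[K] Dᵐᵒᵖ) := fun n =>
    Submodule.span (D ⊗[K] Dᵐᵒᵖ)
      {y | ∃ g ∈ Γ n, y = g ⊗ₜ[K] (1 : Dᵐᵒᵖ) - (1 : D) ⊗ₜ[K] (op g)}
  have hImono : Monotone I := fun m n hmn =>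
    Submodule.span_mono (fun y ⟨g, hg, hy⟩ => ⟨g, hmono hmn hg, hy⟩)
  obtain ⟨N, hN⟩ := monotone_stabilizes_iff_noetherian.2 hNoeth ⟨I, hImono⟩
  refine ⟨N, fun n hn => le_antisymm ?_ (hmono hn)⟩
  intro x hx
  refine key K D (Γ N) (hdiv N) x ?_
  have hmem : x ⊗ₜ[K] (1 : Dᵐᵒᵖ) - (1 : D) ⊗ₜ[K] (op x) ∈ I n :=
    Submodule.subset_span ⟨x, hx, rfl⟩
  have : I n = I N := (hN n hn).symm
  rwa [this] at hmem
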